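/- arXiv:1109.2818 — 6 statements merged into one kernel-verified Lean document; each statement's English description precedes it below -/
import Mathlib

section
/- Dissipativity estimate: set B = max(b₊, −b₋) and M = B·(b + c)/d. If h is a solution of the forced ENSO model on [t₀ − τ₂, ∞) (continuous, and satisfying the delay differential equation for all t > t₀), then for every t ≥ t₀ one has |h(t)| ≤ |h(t₀)|·e^{−d(t−t₀)} + M·(1 − e^{−d(t−t₀)}); in particular the interval [−M, M] is forward invariant: if |h(t₀)| ≤ M then |h(t)| ≤ M for all t ≥ t₀. -/
lemma abs_tanh_le_one (x : ℝ) : |Real.tanh x| ≤ 1 := by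
  rw [Real.tanh_eq_sinh_div_cosh, abs_div, abs_of_pos (Real.cosh_pos x),
    div_le_one (Real.cosh_pos x), abs_le]
  constructor
  · nlinarith [Real.exp_pos x, Real.cosh_sub_sinh x, Real.exp_pos (-x), Real.cosh_add_sinh x]
  · nlinarith [Real.exp_pos (-x), Real.cosh_sub_sinh x]

lemma mono_aux {a bb : ℝ} {u : ℝ → ℝ} (hab : a ≤ bb)
    (hc : ContinuousOn u (Set.Icc a bb))
    (hder : ∀ x ∈ Set.Ioo a bb, ∃ u', HasDerivAt u u' x ∧ 0 ≤ u') :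
    u a ≤ u bb := by
  have := monotoneOn_of_deriv_nonneg (convex_Icc a bb) hc
    (fun x hx => by
      rw [interior_Icc] at hx
      obtain ⟨u', hu', _⟩ := hder x hx
      exact hu'.differentiableAt.differentiableWithinAt)
    (fun x hx => by
      rw [interior_Icc] at hx
      obtain ⟨u', hu', hpos⟩ := hder x hx
      rw [hu'.deriv]; exact hpos)
  exact this (Set.left_mem_Icc.2 hab) (Set.right_mem_Icc.2 hab) hab

/-- Dissipativity estimate for the forced ENSO model: with
`B = max(b₊, −b₋)` and `M = B(b+c)/d`, every solution on `[t₀−τ₂, ∞)`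
satisfies `|h(t)| ≤ |h(t₀)|e^{−d(t−t₀)} + M(1 − e^{−d(t−t₀)})` for `t ≥ t₀`;
in particular `[−M, M]` is forward invariant. -/
theorem enso_dissipativity (b c d τ₁ τ₂ bp bm k₀ dk ω t₀ : ℝ)
    (hb : 0 < b) (hc : 0 < c) (hd : 0 < d) (hτ₁ : 0 < τ₁) (hτ₂ : 0 < τ₂)
    (hbp : 0 < bp) (hbm : bm < 0)
    (G : ℝ → ℝ)
    (hG : ∀ x : ℝ, G x =
      if 0 ≤ x then bp * Real.tanh (x / bp) else bm * Real.tanh (x / bm))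
    (κ : ℝ → ℝ) (hκ : ∀ t : ℝ, κ t = k₀ + dk * Real.sin (ω * t))
    (h : ℝ → ℝ) (hcont : ContinuousOn h (Set.Ici (t₀ - τ₂)))
    (hde : ∀ t : ℝ, t₀ < t → HasDerivAt h
      (b * G (κ (t - τ₁) * h (t - τ₁)) - c * G (κ (t - τ₂) * h (t - τ₂))
        - d * h t) t) :
    (∀ t : ℝ, t₀ ≤ t →
      |h t| ≤ |h t₀| * Real.exp (-(d * (t - t₀)))
        + (max bp (-bm) * (b + c) / d) * (1 - Real.exp (-(d * (t - t₀))))) ∧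
    (|h t₀| ≤ max bp (-bm) * (b + c) / d →
      ∀ t : ℝ, t₀ ≤ t → |h t| ≤ max bp (-bm) * (b + c) / d) := by
  set B := max bp (-bm) with hB
  have hBpos : 0 < B := lt_of_lt_of_le hbp (le_max_left _ _)
  -- bound on G
  have hGbd : ∀ x : ℝ, |G x| ≤ B := by
    intro x
    rw [hG x]
    split_ifs
    · rw [abs_mul, abs_of_pos hbp]
      calc bp * |Real.tanh (x / bp)| ≤ bp * 1 :=
            mul_le_mul_of_nonneg_left (abs_tanh_le_one _) hbp.le
        _ = bp := mul_one _
        _ ≤ B := le_max_left _ _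
    · rw [abs_mul, abs_of_neg hbm]
      calc -bm * |Real.tanh (x / bm)| ≤ -bm * 1 :=
            mul_le_mul_of_nonneg_left (abs_tanh_le_one _) (by linarith)
        _ = -bm := mul_one _
        _ ≤ B := le_max_right _ _
  set K := B * (b + c) with hK
  have hKpos : 0 < K := mul_pos hBpos (by linarith)
  set M := K / d with hM
  have hMpos : 0 < M := div_pos hKpos hd
  -- main estimate
  have main : ∀ t : ℝ, t₀ ≤ t →
      |h t| ≤ |h t₀| * Real.exp (-(d * (t - t₀))) + M * (1 - Real.exp (-(d * (t - t₀)))) := by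
    intro t ht
    -- work with f s = h s * exp (d s)
    set f : ℝ → ℝ := fun s => h s * Real.exp (d * s) with hf
    have hIcc : Set.Icc t₀ t ⊆ Set.Ici (t₀ - τ₂) := fun x hx => by
      simp only [Set.mem_Ici]; have := hx.1; linarith
    have hcf : ContinuousOn f (Set.Icc t₀ t) :=
      ((hcont.mono hIcc).mul ((Real.continuous_exp.comp (continuous_const.mul continuous_id)).continuousOn))
    have hder : ∀ s ∈ Set.Ioo t₀ t,
        HasDerivAt f ((b * G (κ (s - τ₁) * h (s - τ₁)) - c * G (κ (s - τ₂) * h (s - τ₂)))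
          * Real.exp (d * s)) s := by
      intro s hs
      have h1 := hde s hs.1
      have h2 : HasDerivAt (fun s : ℝ => Real.exp (d * s)) (Real.exp (d * s) * d) s :=
        (Real.hasDerivAt_exp (d * s)).comp s (by simpa using (hasDerivAt_id s).const_mul d)
      have := h1.mul h2
      refine this.congr_deriv ?_
      ring
    have hbound : ∀ s, |b * G (κ (s - τ₁) * h (s - τ₁)) - c * G (κ (s - τ₂) * h (s - τ₂))| ≤ K := by
      intro s
      calc |b * G (κ (s - τ₁) * h (s - τ₁)) - c * G (κ (s - τ₂) * h (s - τ₂))|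
          ≤ |b * G (κ (s - τ₁) * h (s - τ₁))| + |c * G (κ (s - τ₂) * h (s - τ₂))| := abs_sub _ _
        _ = b * |G (κ (s - τ₁) * h (s - τ₁))| + c * |G (κ (s - τ₂) * h (s - τ₂))| := by
            rw [abs_mul, abs_mul, abs_of_pos hb, abs_of_pos hc]
        _ ≤ b * B + c * B := add_le_add (mul_le_mul_of_nonneg_left (hGbd _) hb.le)
            (mul_le_mul_of_nonneg_left (hGbd _) hc.le)
        _ = K := by rw [hK]; ring
    -- φ s = M * exp (d s)
    set φ : ℝ → ℝ := fun s => M * Real.exp (d * s) with hφ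
    have hφder : ∀ s : ℝ, HasDerivAt φ (K * Real.exp (d * s)) s := by
      intro s
      have h2 : HasDerivAt (fun s : ℝ => Real.exp (d * s)) (Real.exp (d * s) * d) s :=
        (Real.hasDerivAt_exp (d * s)).comp s (by simpa using (hasDerivAt_id s).const_mul d)
      have := h2.const_mul M
      refine this.congr_deriv ?_
      rw [hM]; field_simp
    have hφc : ContinuousOn φ (Set.Icc t₀ t) :=
      (continuous_const.mul (Real.continuous_exp.comp (continuous_const.mul continuous_id))).continuousOn
    -- u = φ - f and v = φ + f are monotone
    have key : ∀ ε : ℝ, ε = 1 ∨ ε = -1 →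
        φ t₀ + ε * f t₀ ≤ φ t + ε * f t := by
      intro ε hε
      apply mono_aux ht
      · exact hφc.add ((continuousOn_const).mul hcf)
      · intro x hx
        refine ⟨K * Real.exp (d * x) + ε *
          ((b * G (κ (x - τ₁) * h (x - τ₁)) - c * G (κ (x - τ₂) * h (x - τ₂))) * Real.exp (d * x)),
          (hφder x).add ((hder x hx).const_mul ε), ?_⟩
        have hb1 := hbound x
        have hε1 : |ε| = 1 := by rcases hε with rfl | rfl <;> simp
        have hexp := Real.exp_pos (d * x)
        have : |ε * ((b * G (κ (x - τ₁) * h (x - τ₁)) - c * G (κ (x - τ₂) * h (x - τ₂))) * Real.exp (d * x))| ≤ K * Real.exp (d * x) := by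
          rw [abs_mul, hε1, one_mul, abs_mul, abs_of_pos hexp]
          exact mul_le_mul_of_nonneg_right hb1 hexp.le
        have := abs_le.1 this
        linarith [this.1]
    have k1 := key 1 (Or.inl rfl)
    have k2 := key (-1) (Or.inr rfl)
    simp only [one_mul, neg_one_mul] at k1 k2
    -- combine: |f t| ≤ |f t₀| + (φ t - φ t₀)
    have habs : |f t| ≤ |f t₀| + (φ t - φ t₀) := by
      rw [abs_le]
      constructor
      · have := neg_abs_le (f t₀); linarith
      · have := le_abs_self (f t₀); linarith
    -- divide by exp (d t)
    have hE : Real.exp (-(d * (t - t₀))) = Real.exp (d * t₀) / Real.exp (d * t) := by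
      rw [eq_div_iff (Real.exp_pos _).ne', ← Real.exp_add]; ring_nf
    have hexpT := Real.exp_pos (d * t)
    have hft : f t = h t * Real.exp (d * t) := rfl
    have hft0 : f t₀ = h t₀ * Real.exp (d * t₀) := rfl
    rw [hft, hft0, abs_mul, abs_mul, abs_of_pos (Real.exp_pos _), abs_of_pos (Real.exp_pos _)] at habs
    have hφt : φ t = M * Real.exp (d * t) := rfl
    have hφt0 : φ t₀ = M * Real.exp (d * t₀) := rfl
    rw [hφt, hφt0] at habs
    have hE' : Real.exp (-(d * (t - t₀))) * Real.exp (d * t) = Real.exp (d * t₀) := by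
      rw [← Real.exp_add]; ring_nf
    refine le_of_mul_le_mul_right ?_ hexpT
    calc |h t| * Real.exp (d * t)
        ≤ |h t₀| * Real.exp (d * t₀) + (M * Real.exp (d * t) - M * Real.exp (d * t₀)) := habs
      _ = (|h t₀| * Real.exp (-(d * (t - t₀))) + M * (1 - Real.exp (-(d * (t - t₀))))) * Real.exp (d * t) := by
          linear_combination (M - |h t₀|) * hE'
  refine ⟨main, fun hinit t ht => ?_⟩
  have := main t ht
  have hE0 : 0 < Real.exp (-(d * (t - t₀))) := Real.exp_pos _
  have hE1 : Real.exp (-(d * (t - t₀))) ≤ 1 := by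
    rw [Real.exp_le_one_iff]
    nlinarith
  nlinarith [mul_le_mul_of_nonneg_right hinit hE0.le]
end

section
/- Global existence and uniqueness by the method of steps: for every continuous initial history φ : [−τ₂, 0] → ℝ there exists a unique continuous function h : [−τ₂, ∞) → ℝ such that h = φ on [−τ₂, 0], h is differentiable on (0, ∞), and h satisfies the forced ENSO delay differential equation for all t > 0. -/
open Set intervalIntegral

noncomputable def ensoF (b c τ₁ τ₂ : ℝ) (G κ u : ℝ → ℝ) (s : ℝ) : ℝ :=
  b * G (κ (s - τ₁) * u (s - τ₁)) - c * G (κ (s - τ₂) * u (s - τ₂))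

noncomputable def ensoSeq (b c d τ₁ τ₂ : ℝ) (G κ φb : ℝ → ℝ) : ℕ → ℝ → ℝ
  | 0 => φb
  | n + 1 => fun t =>
      if t ≤ 0 then φb t
      else Real.exp (-(d * t)) *
        (φb 0 + ∫ s in (0:ℝ)..t, Real.exp (d * s) *
          ensoF b c τ₁ τ₂ G κ (ensoSeq b c d τ₁ τ₂ G κ φb n) s)

section lemmas
variable {b c d τ₁ τ₂ : ℝ} {G κ φb : ℝ → ℝ}

lemma continuous_tanh' : Continuous Real.tanh := by
  have : Real.tanh = fun x => Real.sinh x / Real.cosh x := funext Real.tanh_eq_sinh_div_cosh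
  rw [this]
  exact Real.continuous_sinh.div Real.continuous_cosh (fun x => (Real.cosh_pos x).ne')

lemma ensoF_cont (hG : Continuous G) (hκ : Continuous κ) {u : ℝ → ℝ} (hu : Continuous u) :
    Continuous (ensoF b c τ₁ τ₂ G κ u) := by
  unfold ensoF; fun_prop

lemma ensoSeq_cont (hG : Continuous G) (hκ : Continuous κ) (hφb : Continuous φb) :
    ∀ n, Continuous (ensoSeq b c d τ₁ τ₂ G κ φb n) := by
  intro n
  induction n with
  | zero => exact hφb
  | succ n ih =>
    show Continuous fun t => if t ≤ 0 then φb t else _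
    have hk : Continuous fun s => Real.exp (d * s) *
        ensoF b c τ₁ τ₂ G κ (ensoSeq b c d τ₁ τ₂ G κ φb n) s :=
      (Real.continuous_exp.comp (continuous_const.mul continuous_id)).mul
        (ensoF_cont hG hκ ih)
    have hP : Continuous fun t => ∫ s in (0:ℝ)..t, Real.exp (d * s) *
        ensoF b c τ₁ τ₂ G κ (ensoSeq b c d τ₁ τ₂ G κ φb n) s :=
      intervalIntegral.continuous_primitive (fun a b => hk.intervalIntegrable a b) 0
    have h2 : Continuous fun t => Real.exp (-(d * t)) * (φb 0 +
        ∫ s in (0:ℝ)..t, Real.exp (d * s) *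
          ensoF b c τ₁ τ₂ G κ (ensoSeq b c d τ₁ τ₂ G κ φb n) s) :=
      (Real.continuous_exp.comp (continuous_const.mul continuous_id).neg).mul
        (continuous_const.add hP)
    exact Continuous.if_le hφb h2 continuous_id continuous_const
      (fun x hx => by subst hx; simp)

lemma ensoSeq_agree (hτ₁ : 0 < τ₁) (hτ₁₂ : τ₁ ≤ τ₂) :
    ∀ n : ℕ, ∀ t : ℝ, t ≤ n * τ₁ →
      ensoSeq b c d τ₁ τ₂ G κ φb (n + 1) t = ensoSeq b c d τ₁ τ₂ G κ φb n t := by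
  intro n
  induction n with
  | zero =>
    intro t ht
    simp only [Nat.cast_zero, zero_mul] at ht
    show (if t ≤ 0 then φb t else _) = φb t
    rw [if_pos ht]
  | succ n ih =>
    intro t ht
    show (if t ≤ 0 then φb t else _) = (if t ≤ 0 then φb t else _)
    by_cases h0 : t ≤ 0
    · rw [if_pos h0, if_pos h0]
    · rw [if_neg h0, if_neg h0]
      push_neg at h0
      congr 2
      apply intervalIntegral.integral_congr
      intro s hs
      rw [uIcc_of_le h0.le] at hs
      unfold ensoF
      have h1 : s - τ₁ ≤ n * τ₁ := by
        have : s ≤ t := hs.2; push_cast at ht ⊢; nlinarith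
      have h2 : s - τ₂ ≤ n * τ₁ := by
        have : s ≤ t := hs.2; push_cast at ht ⊢; nlinarith
      simp only [ih _ h1, ih _ h2]

lemma ensoSeq_stable (hτ₁ : 0 < τ₁) (hτ₁₂ : τ₁ ≤ τ₂) :
    ∀ n m : ℕ, n ≤ m → ∀ t : ℝ, t ≤ n * τ₁ →
      ensoSeq b c d τ₁ τ₂ G κ φb m t = ensoSeq b c d τ₁ τ₂ G κ φb n t := by
  intro n m hnm
  induction m, hnm using Nat.le_induction with
  | base => intro t _; rfl
  | succ m hnm ih =>
    intro t ht
    have h1 : t ≤ m * τ₁ := le_trans ht (by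
      have : (n:ℝ) ≤ m := by exact_mod_cast hnm
      nlinarith)
    rw [ensoSeq_agree hτ₁ hτ₁₂ m t h1, ih t ht]

end lemmas

/-- Global existence and uniqueness by the method of steps: for every
continuous initial history `φ : [−τ₂, 0] → ℝ` there exists a unique
continuous function `h : [−τ₂, ∞) → ℝ` with `h = φ` on `[−τ₂, 0]` that
satisfies the forced ENSO delay differential equation for all `t > 0`. -/
theorem enso_existence_uniqueness (b c d τ₁ τ₂ bp bm k₀ dk ω : ℝ)
    (hb : 0 < b) (hc : 0 < c) (hd : 0 < d) (hτ₁ : 0 < τ₁) (hτ₁₂ : τ₁ ≤ τ₂)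
    (hbp : 0 < bp) (hbm : bm < 0)
    (G : ℝ → ℝ)
    (hG : ∀ x : ℝ, G x =
      if 0 ≤ x then bp * Real.tanh (x / bp) else bm * Real.tanh (x / bm))
    (κ : ℝ → ℝ) (hκ : ∀ t : ℝ, κ t = k₀ + dk * Real.sin (ω * t))
    (φ : ℝ → ℝ) (hφ : ContinuousOn φ (Set.Icc (-τ₂) 0)) :
    ∃ h : ℝ → ℝ,
      (ContinuousOn h (Set.Ici (-τ₂)) ∧
        (∀ t ∈ Set.Icc (-τ₂) (0 : ℝ), h t = φ t) ∧
        (∀ t : ℝ, 0 < t → HasDerivAt h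
          (b * G (κ (t - τ₁) * h (t - τ₁)) - c * G (κ (t - τ₂) * h (t - τ₂))
            - d * h t) t)) ∧
      (∀ g : ℝ → ℝ,
        (ContinuousOn g (Set.Ici (-τ₂)) ∧
          (∀ t ∈ Set.Icc (-τ₂) (0 : ℝ), g t = φ t) ∧
          (∀ t : ℝ, 0 < t → HasDerivAt g
            (b * G (κ (t - τ₁) * g (t - τ₁)) - c * G (κ (t - τ₂) * g (t - τ₂))
              - d * g t) t)) →
        ∀ t : ℝ, -τ₂ ≤ t → g t = h t) := by
  have hτ₂0 : 0 < τ₂ := lt_of_lt_of_le hτ₁ hτ₁₂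
  -- continuity of G and κ
  have hG_cont : Continuous G := by
    have : G = fun x : ℝ => if (0:ℝ) ≤ x then bp * Real.tanh (x / bp)
        else bm * Real.tanh (x / bm) := funext hG
    rw [this]
    exact Continuous.if_le
      (continuous_const.mul (continuous_tanh'.comp (continuous_id.div_const bp)))
      (continuous_const.mul (continuous_tanh'.comp (continuous_id.div_const bm)))
      continuous_const continuous_id
      (fun x hx => by simp [← hx])
  have hκ_cont : Continuous κ := by
    have : κ = fun t : ℝ => k₀ + dk * Real.sin (ω * t) := funext hκ
    rw [this]; fun_prop
  -- extended history
  set φb : ℝ → ℝ := fun t => φ (max (-τ₂) (min t 0)) with hφbdef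
  have hmem : ∀ t : ℝ, max (-τ₂) (min t 0) ∈ Icc (-τ₂) (0:ℝ) := by
    intro t
    constructor
    · exact le_max_left _ _
    · exact max_le (by linarith) (min_le_right _ _)
  have hφb : Continuous φb :=
    hφ.comp_continuous (continuous_const.max (continuous_id.min continuous_const)) hmem
  have hφb_eq : ∀ t ∈ Icc (-τ₂) (0:ℝ), φb t = φ t := by
    intro t ht
    simp only [hφbdef]
    rw [min_eq_left ht.2, max_eq_right ht.1]
  set S : ℕ → ℝ → ℝ := ensoSeq b c d τ₁ τ₂ G κ φb with hSdef
  have hS_cont : ∀ n, Continuous (S n) := ensoSeq_cont hG_cont hκ_cont hφb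
  have t_le : ∀ t : ℝ, t ≤ (⌈t / τ₁⌉₊ : ℝ) * τ₁ := by
    intro t
    have := Nat.le_ceil (t / τ₁)
    calc t = t / τ₁ * τ₁ := by field_simp
    _ ≤ (⌈t / τ₁⌉₊ : ℝ) * τ₁ := by nlinarith
  set h : ℝ → ℝ := fun t => S ⌈t / τ₁⌉₊ t with hhdef
  have h_eq : ∀ (n : ℕ) (t : ℝ), t ≤ (n:ℝ) * τ₁ → h t = S n t := by
    intro n t ht
    have h1 : S (max n ⌈t / τ₁⌉₊) t = S ⌈t / τ₁⌉₊ t :=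
      ensoSeq_stable hτ₁ hτ₁₂ _ _ (le_max_right _ _) t (t_le t)
    have h2 : S (max n ⌈t / τ₁⌉₊) t = S n t :=
      ensoSeq_stable hτ₁ hτ₁₂ _ _ (le_max_left _ _) t ht
    show S ⌈t / τ₁⌉₊ t = S n t
    rw [← h1, h2]
  have h_hist : ∀ t ∈ Icc (-τ₂) (0:ℝ), h t = φ t := by
    intro t ht
    have : h t = S 0 t := h_eq 0 t (by simpa using ht.2)
    rw [this]
    exact hφb_eq t ht
  have h_cont : Continuous h := by
    rw [continuous_iff_continuousAt]
    intro t
    set n : ℕ := ⌈t / τ₁⌉₊ + 1 with hn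
    have htn : t < (n:ℝ) * τ₁ := by
      have := t_le t
      push_cast [hn]
      nlinarith
    have hev : h =ᶠ[nhds t] S n := by
      filter_upwards [isOpen_Iio.mem_nhds (show t ∈ Iio ((n:ℝ) * τ₁) from htn)] with s hs
      exact h_eq n s (le_of_lt hs)
    exact ((hS_cont n).continuousAt).congr hev.symm
  -- the derivative
  have h_deriv : ∀ t : ℝ, 0 < t → HasDerivAt h
      (b * G (κ (t - τ₁) * h (t - τ₁)) - c * G (κ (t - τ₂) * h (t - τ₂)) - d * h t) t := by
    intro t ht
    set m : ℕ := ⌈t / τ₁⌉₊ with hm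
    have htm : t ≤ (m:ℝ) * τ₁ := t_le t
    have htm1 : t < ((m + 1 : ℕ):ℝ) * τ₁ := by push_cast; nlinarith
    set k : ℝ → ℝ := fun s => Real.exp (d * s) * ensoF b c τ₁ τ₂ G κ (S m) s with hkdef
    have hk_cont : Continuous k :=
      (Real.continuous_exp.comp (continuous_const.mul continuous_id)).mul
        (ensoF_cont hG_cont hκ_cont (hS_cont m))
    set P : ℝ → ℝ := fun u => ∫ s in (0:ℝ)..u, k s with hPdef
    set ψ : ℝ → ℝ := fun u => Real.exp (-(d * u)) * (φb 0 + P u) with hψdef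
    have hev : h =ᶠ[nhds t] ψ := by
      filter_upwards [isOpen_Ioo.mem_nhds (show t ∈ Ioo (0:ℝ) (((m + 1 : ℕ) : ℝ) * τ₁) from ⟨ht, htm1⟩)] with u hu
      have h1 : h u = S (m + 1) u := h_eq (m + 1) u (le_of_lt hu.2)
      rw [h1]
      show (if u ≤ 0 then φb u else _) = ψ u
      rw [if_neg (not_le.mpr hu.1)]
    -- derivative of ψ at t
    have hP_deriv : HasDerivAt P (k t) t :=
      intervalIntegral.integral_hasDerivAt_right (hk_cont.intervalIntegrable 0 t)
        (hk_cont.stronglyMeasurable.stronglyMeasurableAtFilter)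
        hk_cont.continuousAt
    have hE : HasDerivAt (fun u => Real.exp (-(d * u))) (Real.exp (-(d * t)) * (-d)) t := by
      have h1 : HasDerivAt (fun u : ℝ => -(d * u)) (-d) t := by
        exact (((hasDerivAt_id t).const_mul d).neg).congr_deriv (by simp)
      exact (Real.hasDerivAt_exp (-(d * t))).comp t h1
    have hψ_deriv : HasDerivAt ψ
        (Real.exp (-(d * t)) * (-d) * (φb 0 + P t) + Real.exp (-(d * t)) * k t) t :=
      hE.mul (hP_deriv.const_add (φb 0))
    have hht : h t = Real.exp (-(d * t)) * (φb 0 + P t) := hev.self_of_nhds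
    have hd1 : t - τ₁ ≤ (m:ℝ) * τ₁ := by linarith
    have hd2 : t - τ₂ ≤ (m:ℝ) * τ₁ := by linarith
    have hF : ensoF b c τ₁ τ₂ G κ (S m) t
        = b * G (κ (t - τ₁) * h (t - τ₁)) - c * G (κ (t - τ₂) * h (t - τ₂)) := by
      unfold ensoF
      rw [h_eq m _ hd1, h_eq m _ hd2]
    have key : HasDerivAt h
        (Real.exp (-(d * t)) * (-d) * (φb 0 + P t) + Real.exp (-(d * t)) * k t) t :=
      hψ_deriv.congr_of_eventuallyEq hev
    convert key using 1
    rw [← hF, hht, hkdef]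
    have hexp : Real.exp (-(d * t)) * Real.exp (d * t) = 1 := by
      rw [← Real.exp_add]; simp
    simp only
    linear_combination (-(ensoF b c τ₁ τ₂ G κ (S m) t)) * hexp
  refine ⟨h, ⟨h_cont.continuousOn, h_hist, h_deriv⟩, ?_⟩
  -- uniqueness
  rintro g ⟨gcont, ghist, gderiv⟩
  have claim : ∀ n : ℕ, ∀ t ∈ Icc (-τ₂) ((n:ℝ) * τ₁), g t = h t := by
    intro n
    induction n with
    | zero =>
      intro t ht
      simp only [Nat.cast_zero, zero_mul] at ht
      rw [ghist t ht, h_hist t ht]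
    | succ n ih =>
      intro t ht
      by_cases hcase : t ≤ (n:ℝ) * τ₁
      · exact ih t ⟨ht.1, hcase⟩
      push_neg at hcase
      set a : ℝ := (n:ℝ) * τ₁ with hadef
      have ha0 : 0 ≤ a := by positivity
      have hat : a < t := hcase
      have htt : t ≤ ((n:ℝ) + 1) * τ₁ := by
        have := ht.2; push_cast at this; linarith
      set w : ℝ → ℝ := fun s => Real.exp (d * s) * (g s - h s) with hwdef
      have hw_a : w a = 0 := by
        have : g a = h a := ih a ⟨by linarith, le_refl _⟩
        simp [hwdef, this]
      have hwd : ∀ x ∈ Ioc a t, HasDerivAt w 0 x := by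
        intro x hx
        have hx0 : 0 < x := lt_of_le_of_lt ha0 hx.1
        have hxd1 : g (x - τ₁) = h (x - τ₁) := by
          apply ih
          constructor
          · linarith
          · linarith [hx.2]
        have hxd2 : g (x - τ₂) = h (x - τ₂) := by
          apply ih
          constructor
          · linarith
          · linarith [hx.2]
        have hg' := gderiv x hx0
        have hh' := h_deriv x hx0
        rw [hxd1, hxd2] at hg'
        have hsub : HasDerivAt (fun s => g s - h s) (-d * (g x - h x)) x := by
          have := hg'.sub hh'
          exact this.congr_deriv (by ring)
        have hE : HasDerivAt (fun s => Real.exp (d * s)) (Real.exp (d * x) * d) x := by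
          have h1 : HasDerivAt (fun s : ℝ => d * s) d x := by
            simpa using (hasDerivAt_id x).const_mul d
          exact (Real.hasDerivAt_exp (d * x)).comp x h1
        have := hE.mul hsub
        exact this.congr_deriv (by ring)
      have hw_cont : ContinuousOn w (Ici (-τ₂)) :=
        ((Real.continuous_exp.comp (continuous_const.mul continuous_id)).continuousOn).mul
          (gcont.sub h_cont.continuousOn)
      have hconst : ∀ s ∈ Ioc a t, w s = w t := by
        intro s hs
        rcases eq_or_lt_of_le hs.2 with heq | hlt
        · rw [heq]
        · have hsub : Icc s t ⊆ Ici (-τ₂) := fun y hy => le_trans (by linarith [hs.1]) hy.1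
          have := constant_of_has_deriv_right_zero (hw_cont.mono hsub)
            (fun x hx => (hwd x ⟨lt_of_lt_of_le hs.1 hx.1, le_of_lt hx.2⟩).hasDerivWithinAt) t
            ⟨le_of_lt hlt, le_refl t⟩
          exact this.symm
      have hwa_eq : w a = w t := by
        haveI : (nhdsWithin a (Ioc a t)).NeBot := left_nhdsWithin_Ioc_neBot hat
        have h1 : Filter.Tendsto w (nhdsWithin a (Ioc a t)) (nhds (w a)) := by
          have : ContinuousWithinAt w (Ici (-τ₂)) a :=
            hw_cont a (by simp only [mem_Ici]; linarith)
          exact this.mono (fun y hy => by simp only [mem_Ici]; linarith [hy.1]) |>.tendsto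
        have h2 : Filter.Tendsto w (nhdsWithin a (Ioc a t)) (nhds (w t)) := by
          apply Filter.Tendsto.congr' _ tendsto_const_nhds
          exact (eventually_nhdsWithin_of_forall hconst).mono (fun x hx => hx.symm)
        exact tendsto_nhds_unique h1 h2
      have hw_t : w t = 0 := by rw [← hwa_eq, hw_a]
      have hexp : Real.exp (d * t) ≠ 0 := Real.exp_ne_zero _
      have : g t - h t = 0 := by
        by_contra hne
        exact hne (by
          have := hw_t
          simp only [hwdef] at this
          exact (mul_eq_zero.mp this).resolve_left hexp)
      linarith [this]
  intro t ht
  exact claim ⌈t / τ₁⌉₊ t ⟨ht, t_le t⟩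
end

section
/- Sufficient condition for linear stability of the trivial equilibrium: if k₀·(b + c) < d, then every root λ ∈ ℂ of the characteristic function χ satisfies Re λ < 0. -/
/-- Sufficient condition for linear stability of the trivial equilibrium:
if `k₀(b+c) < d`, then every root `λ ∈ ℂ` of the characteristic function `χ`
satisfies `Re λ < 0`. -/
theorem enso_linear_stability (b c d τ₁ τ₂ k₀ : ℝ)
    (hb : 0 < b) (hc : 0 < c) (hd : 0 < d) (hτ₁ : 0 < τ₁) (hτ₂ : 0 < τ₂)
    (hbc : c < b) (hk₀ : 0 ≤ k₀)
    (χ : ℂ → ℂ)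
    (hχ : ∀ lam : ℂ, χ lam = lam + (d : ℂ)
      - (b : ℂ) * (k₀ : ℂ) * Complex.exp (-(lam * (τ₁ : ℂ)))
      + (c : ℂ) * (k₀ : ℂ) * Complex.exp (-(lam * (τ₂ : ℂ))))
    (hstab : k₀ * (b + c) < d) :
    ∀ lam : ℂ, χ lam = 0 → lam.re < 0 := by
  intro lam hroot
  by_contra h
  push_neg at h
  rw [hχ] at hroot
  have heq : lam + (d : ℂ)
      = (b : ℂ) * (k₀ : ℂ) * Complex.exp (-(lam * (τ₁ : ℂ)))
      - (c : ℂ) * (k₀ : ℂ) * Complex.exp (-(lam * (τ₂ : ℂ))) := by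
    linear_combination hroot
  have habs1 : ‖Complex.exp (-(lam * (τ₁ : ℂ)))‖ ≤ 1 := by
    rw [Complex.norm_exp]
    apply Real.exp_le_one_iff.mpr
    simp [mul_comm]
    nlinarith
  have habs2 : ‖Complex.exp (-(lam * (τ₂ : ℂ)))‖ ≤ 1 := by
    rw [Complex.norm_exp]
    apply Real.exp_le_one_iff.mpr
    simp [mul_comm]
    nlinarith
  have hlb : d ≤ ‖lam + (d : ℂ)‖ := by
    have : d ≤ (lam + (d : ℂ)).re := by simp; linarith
    calc d ≤ (lam + (d : ℂ)).re := this
      _ ≤ ‖lam + (d : ℂ)‖ := Complex.re_le_norm _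
  have hub : ‖lam + (d : ℂ)‖ ≤ k₀ * (b + c) := by
    rw [heq]
    calc ‖_‖ ≤ ‖(b : ℂ) * (k₀ : ℂ) * Complex.exp (-(lam * (τ₁ : ℂ)))‖
        + ‖(c : ℂ) * (k₀ : ℂ) * Complex.exp (-(lam * (τ₂ : ℂ)))‖ :=
          norm_sub_le _ _
      _ ≤ b * k₀ * 1 + c * k₀ * 1 := by
          rw [norm_mul, norm_mul, norm_mul, norm_mul, Complex.norm_real, Complex.norm_real,
            Complex.norm_real, Real.norm_eq_abs, Real.norm_eq_abs, Real.norm_eq_abs, abs_of_pos hb, abs_of_pos hc,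
            abs_of_nonneg hk₀]
          gcongr <;> positivity
      _ = k₀ * (b + c) := by ring
  linarith
end

section
/- Instability of the trivial equilibrium past the branch point: if k₀ > d/(b − c), then the characteristic function χ has a real root λ > 0 (so the trivial equilibrium h ≡ 0 of the unforced ENSO model is linearly unstable for all k₀ beyond the branch point B). -/
/-- Instability of the trivial equilibrium past the branch point: if
`k₀ > d/(b−c)`, then the characteristic function `χ` has a real root
`λ > 0`. -/
theorem enso_instability_past_branch_point (b c d τ₁ τ₂ k₀ : ℝ)
    (hb : 0 < b) (hc : 0 < c) (hd : 0 < d) (hτ₁ : 0 < τ₁) (hτ₂ : 0 < τ₂)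
    (hbc : c < b) (hk₀ : 0 ≤ k₀)
    (χ : ℂ → ℂ)
    (hχ : ∀ lam : ℂ, χ lam = lam + (d : ℂ)
      - (b : ℂ) * (k₀ : ℂ) * Complex.exp (-(lam * (τ₁ : ℂ)))
      + (c : ℂ) * (k₀ : ℂ) * Complex.exp (-(lam * (τ₂ : ℂ))))
    (hpast : d / (b - c) < k₀) :
    ∃ lam : ℝ, 0 < lam ∧ χ (lam : ℂ) = 0 := by
  set g : ℝ → ℝ := fun x => x + d - b * k₀ * Real.exp (-(x * τ₁))
      + c * k₀ * Real.exp (-(x * τ₂)) with hg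
  have hcont : Continuous g := by fun_prop
  have hbc' : 0 < b - c := by linarith
  have hk₀pos : 0 < k₀ := lt_of_le_of_lt (div_nonneg hd.le hbc'.le) hpast
  have hg0 : g 0 < 0 := by
    simp only [hg, zero_mul, neg_zero, Real.exp_zero, mul_one, zero_add]
    have := (div_lt_iff₀ hbc').mp hpast
    nlinarith
  have hM : 0 < b * k₀ := mul_pos hb hk₀pos
  have hgM : 0 < g (b * k₀) := by
    have h1 : Real.exp (-(b * k₀ * τ₁)) ≤ 1 := by
      rw [Real.exp_le_one_iff]; nlinarith
    have h2 : 0 ≤ c * k₀ * Real.exp (-(b * k₀ * τ₂)) := by positivity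
    have h3 : 0 < b * k₀ := hM
    simp only [hg]
    nlinarith
  obtain ⟨lam, hmem, hroot⟩ := intermediate_value_Icc hM.le hcont.continuousOn
    ⟨hg0.le, hgM.le⟩
  refine ⟨lam, ?_, ?_⟩
  · rcases lt_or_eq_of_le hmem.1 with h | h
    · exact h
    · exfalso; rw [← h] at hroot; linarith
  · rw [hχ]
    have : ((g lam : ℝ) : ℂ) = (lam : ℂ) + (d : ℂ)
        - (b : ℂ) * (k₀ : ℂ) * Complex.exp (-((lam : ℂ) * (τ₁ : ℂ)))
        + (c : ℂ) * (k₀ : ℂ) * Complex.exp (-((lam : ℂ) * (τ₂ : ℂ))) := by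
      simp [hg]
    rw [← this, hroot, Complex.ofReal_zero]
end

section
/- Uniqueness of the trivial equilibrium below the branch point: if 0 ≤ k₀·(b − c) ≤ d, then x₀ = 0 is the only real solution of the equilibrium equation (b − c)·G(k₀·x₀) = d·x₀. -/
lemma sinh_lt_mul_cosh {t : ℝ} (ht : 0 < t) : Real.sinh t < t * Real.cosh t := by
  have h : StrictMonoOn (fun x : ℝ => x * Real.cosh x - Real.sinh x) (Set.Ici 0) := by
    apply strictMonoOn_of_deriv_pos (convex_Ici 0)
    · exact (Continuous.mul continuous_id Real.continuous_cosh).sub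
        Real.continuous_sinh |>.continuousOn
    · intro x hx
      rw [interior_Ici] at hx
      have hd : HasDerivAt (fun x : ℝ => x * Real.cosh x - Real.sinh x)
          (1 * Real.cosh x + x * Real.sinh x - Real.cosh x) x := by
        exact ((hasDerivAt_id x).mul (Real.hasDerivAt_cosh x)).sub (Real.hasDerivAt_sinh x)
      rw [hd.deriv]
      have : 0 < x * Real.sinh x := mul_pos hx (Real.sinh_pos_iff.2 hx)
      nlinarith
  have := h (Set.self_mem_Ici) (Set.mem_Ici.2 ht.le) ht
  simpa using this

lemma tanh_lt_self {t : ℝ} (ht : 0 < t) : Real.tanh t < t := by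
  rw [Real.tanh_eq_sinh_div_cosh, div_lt_iff₀ (Real.cosh_pos t)]
  exact sinh_lt_mul_cosh ht

/-- Uniqueness of the trivial equilibrium below the branch point: if
`0 ≤ k₀(b−c) ≤ d`, then `x₀ = 0` is the only real solution of the
equilibrium equation `(b−c)·G(k₀·x₀) = d·x₀`. -/
theorem enso_trivial_equilibrium_unique (b c d k₀ bp bm : ℝ)
    (hb : 0 < b) (hbc : c < b) (hc : 0 < c) (hd : 0 < d) (hk₀ : 0 ≤ k₀)
    (hbp : 0 < bp) (hbm : bm < 0)
    (G : ℝ → ℝ)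
    (hG : ∀ x : ℝ, G x =
      if 0 ≤ x then bp * Real.tanh (x / bp) else bm * Real.tanh (x / bm))
    (h0 : 0 ≤ k₀ * (b - c)) (h1 : k₀ * (b - c) ≤ d) :
    ∀ x₀ : ℝ, (b - c) * G (k₀ * x₀) = d * x₀ → x₀ = 0 := by
  intro x hx
  have hbc' : 0 < b - c := sub_pos.2 hbc
  rcases eq_or_lt_of_le hk₀ with hk | hk
  · -- k₀ = 0
    have : G 0 = 0 := by rw [hG]; simp
    rw [← hk] at hx
    simp [this] at hx
    rcases hx with h | h
    · exact absurd h hd.ne'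
    · exact h
  rcases lt_trichotomy x 0 with hxneg | hxz | hxpos
  · exfalso
    have hkx : k₀ * x < 0 := mul_neg_of_pos_of_neg hk hxneg
    have hGval : G (k₀ * x) = bm * Real.tanh (k₀ * x / bm) := by
      rw [hG]; rw [if_neg (not_le.2 hkx)]
    have harg : 0 < k₀ * x / bm := div_pos_of_neg_of_neg hkx hbm
    have htanh : Real.tanh (k₀ * x / bm) < k₀ * x / bm := tanh_lt_self harg
    have hGgt : k₀ * x < G (k₀ * x) := by
      rw [hGval]
      have := mul_lt_mul_of_neg_left htanh hbm
      rwa [mul_div_cancel₀ _ (ne_of_lt hbm)] at this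
    have h2 : (b - c) * (k₀ * x) < (b - c) * G (k₀ * x) :=
      mul_lt_mul_of_pos_left hGgt hbc'
    -- (b-c)*k₀ ≤ d and x < 0 gives d*x ≤ (b-c)*k₀*x
    nlinarith
  · exact hxz
  · exfalso
    have hkx : 0 < k₀ * x := mul_pos hk hxpos
    have hGval : G (k₀ * x) = bp * Real.tanh (k₀ * x / bp) := by
      rw [hG]; rw [if_pos hkx.le]
    have harg : 0 < k₀ * x / bp := div_pos hkx hbp
    have htanh : Real.tanh (k₀ * x / bp) < k₀ * x / bp := tanh_lt_self harg
    have hGlt : G (k₀ * x) < k₀ * x := by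
      rw [hGval]
      have := mul_lt_mul_of_pos_left htanh hbp
      rwa [mul_div_cancel₀ _ (ne_of_gt hbp)] at this
    have h2 : (b - c) * G (k₀ * x) < (b - c) * (k₀ * x) :=
      mul_lt_mul_of_pos_left hGlt hbc'
    nlinarith
end

section
/- Global attractivity of the trivial solution under strong damping: if (b + c)·(|k₀| + |d_k|) < d, then every solution h of the forced ENSO model defined on a half-line [t₀ − τ₂, ∞) satisfies h(t) → 0 as t → ∞. -/
open Set Filter Real

private lemma my_tanh_le_self {u : ℝ} (hu : 0 ≤ u) : Real.tanh u ≤ u := by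
  rw [Real.tanh_eq_sinh_div_cosh, div_le_iff₀ (Real.cosh_pos u)]
  have key : MonotoneOn (fun x => x * Real.cosh x - Real.sinh x) (Set.Ici 0) := by
    apply monotoneOn_of_deriv_nonneg (convex_Ici 0)
    · exact ((continuous_id.mul Real.continuous_cosh).sub Real.continuous_sinh).continuousOn
    · intro x _
      exact (((hasDerivAt_id x).mul (Real.hasDerivAt_cosh x)).sub
        (Real.hasDerivAt_sinh x)).differentiableAt.differentiableWithinAt
    · intro x hx
      rw [interior_Ici, mem_Ioi] at hx
      have key := ((hasDerivAt_id x).mul (Real.hasDerivAt_cosh x)).sub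
        (Real.hasDerivAt_sinh x)
      have hda : HasDerivAt (fun x => x * Real.cosh x - Real.sinh x)
          (x * Real.sinh x) x := by
        have h2 : x * Real.sinh x
            = 1 * Real.cosh x + id x * Real.sinh x - Real.cosh x := by
          simp only [id_eq, one_mul]; ring
        rw [h2]; exact key
      rw [hda.deriv]
      have hs : 0 ≤ Real.sinh x := Real.sinh_nonneg_iff.2 hx.le
      nlinarith [mul_nonneg hx.le hs]
  have h0 := key (Set.self_mem_Ici) (show u ∈ Set.Ici (0:ℝ) from hu) hu
  simp only [Real.cosh_zero, Real.sinh_zero, zero_mul, sub_zero, mul_zero] at h0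
  linarith

/-- If `g` vanishes-or-above at `c`, is negative just before `c`, and has negative
derivative at `c`, we get a contradiction. -/
private lemma no_upcross {g : ℝ → ℝ} {s c w : ℝ} (hs : s < c)
    (hneg : ∀ t, s < t → t < c → g t < 0) (hg0 : 0 ≤ g c)
    (hw : HasDerivAt g w c) (hwneg : w < 0) : False := by
  have hslope := hasDerivAt_iff_tendsto_slope.1 hw
  have h1 : ∀ᶠ t in nhdsWithin c {c}ᶜ, slope g c t < 0 :=
    hslope.eventually_lt_const hwneg
  have h2 : ∀ᶠ t in nhdsWithin c (Set.Iio c), slope g c t < 0 :=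
    h1.filter_mono (nhdsWithin_mono c (fun x hx => ne_of_lt hx))
  have h3 : ∀ᶠ t in nhdsWithin c (Set.Iio c), s < t :=
    (eventually_gt_nhds hs).filter_mono nhdsWithin_le_nhds
  have h4 : ∀ᶠ t in nhdsWithin c (Set.Iio c), t < c :=
    eventually_mem_nhdsWithin
  obtain ⟨t, h2t, h3t, h4t⟩ := (h2.and (h3.and h4)).exists
  rw [slope_def_field] at h2t
  have hgt : 0 < g t - g c := by
    by_contra hle
    push_neg at hle
    have : 0 ≤ (g t - g c) / (t - c) :=
      div_nonneg_iff.2 (Or.inr ⟨hle, by linarith⟩)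
    linarith
  have := hneg t h3t h4t
  linarith

set_option maxHeartbeats 1000000 in
/-- Global attractivity of the trivial solution under strong damping: if
`(b+c)(|k₀|+|d_k|) < d`, then every solution `h` of the forced ENSO model
defined on a half-line `[t₀−τ₂, ∞)` satisfies `h(t) → 0` as `t → ∞`. -/
theorem enso_global_attractivity (b c d τ₁ τ₂ bp bm k₀ dk ω t₀ : ℝ)
    (hb : 0 < b) (hc : 0 < c) (hd : 0 < d) (hτ₁ : 0 < τ₁) (hτ₂ : 0 < τ₂)
    (hbp : 0 < bp) (hbm : bm < 0)
    (G : ℝ → ℝ)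
    (hG : ∀ x : ℝ, G x =
      if 0 ≤ x then bp * Real.tanh (x / bp) else bm * Real.tanh (x / bm))
    (κ : ℝ → ℝ) (hκ : ∀ t : ℝ, κ t = k₀ + dk * Real.sin (ω * t))
    (hdamp : (b + c) * (|k₀| + |dk|) < d)
    (h : ℝ → ℝ) (hcont : ContinuousOn h (Set.Ici (t₀ - τ₂)))
    (hde : ∀ t : ℝ, t₀ < t → HasDerivAt h
      (b * G (κ (t - τ₁) * h (t - τ₁)) - c * G (κ (t - τ₂) * h (t - τ₂))
        - d * h t) t) :
    Filter.Tendsto h Filter.atTop (nhds 0) := by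
  -- Notation
  set K : ℝ := |k₀| + |dk| with hKdef
  have hK0 : 0 ≤ K := add_nonneg (abs_nonneg _) (abs_nonneg _)
  set a : ℝ := (b + c) * K with hadef
  have ha0 : 0 ≤ a := mul_nonneg (by linarith) hK0
  have had : a < d := hdamp
  set τ : ℝ := max τ₁ τ₂ with hτdef
  have hτ1 : τ₁ ≤ τ := le_max_left _ _
  have hτ2 : τ₂ ≤ τ := le_max_right _ _
  have hτpos : 0 < τ := lt_of_lt_of_le hτ₁ hτ1
  set t₁ : ℝ := t₀ + τ + 1 with ht₁def
  -- Bound on κ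
  have hκb : ∀ t, |κ t| ≤ K := by
    intro t
    rw [hκ t]
    calc |k₀ + dk * Real.sin (ω * t)| ≤ |k₀| + |dk * Real.sin (ω * t)| := abs_add_le _ _
      _ ≤ |k₀| + |dk| * 1 := by
          rw [abs_mul]
          gcongr
          exact abs_le.2 ⟨Real.neg_one_le_sin _, Real.sin_le_one _⟩
      _ = K := by rw [mul_one]
  -- Bound on G
  have hGb : ∀ x, |G x| ≤ |x| := by
    intro x
    rw [hG x]
    split_ifs with hx
    · have hdiv : 0 ≤ x / bp := div_nonneg hx hbp.le
      have htanh0 : 0 ≤ Real.tanh (x / bp) := by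
        rw [Real.tanh_eq_sinh_div_cosh]
        exact div_nonneg (Real.sinh_nonneg_iff.2 hdiv) (Real.cosh_pos _).le
      have htanh1 : Real.tanh (x / bp) ≤ x / bp := my_tanh_le_self hdiv
      rw [abs_of_nonneg (mul_nonneg hbp.le htanh0), abs_of_nonneg hx]
      calc bp * Real.tanh (x / bp) ≤ bp * (x / bp) :=
            mul_le_mul_of_nonneg_left htanh1 hbp.le
        _ = x := by field_simp
    · push_neg at hx
      have hdiv : 0 ≤ x / bm := (div_pos_of_neg_of_neg hx hbm).le
      have htanh0 : 0 ≤ Real.tanh (x / bm) := by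
        rw [Real.tanh_eq_sinh_div_cosh]
        exact div_nonneg (Real.sinh_nonneg_iff.2 hdiv) (Real.cosh_pos _).le
      have htanh1 : Real.tanh (x / bm) ≤ x / bm := my_tanh_le_self hdiv
      have hle0 : bm * Real.tanh (x / bm) ≤ 0 := mul_nonpos_of_nonpos_of_nonneg hbm.le htanh0
      rw [abs_of_nonpos hle0, abs_of_neg hx]
      have : (-bm) * Real.tanh (x / bm) ≤ (-bm) * (x / bm) :=
        mul_le_mul_of_nonneg_left htanh1 (by linarith)
      have hbm0 : bm ≠ 0 := ne_of_lt hbm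
      have heq : (-bm) * (x / bm) = -x := by
        field_simp
      nlinarith
  -- Choice of γ
  obtain ⟨γ, hγpos, hγ⟩ : ∃ γ : ℝ, 0 < γ ∧ a * Real.exp (γ * τ) + γ < d := by
    have hco : Tendsto (fun γ : ℝ => a * Real.exp (γ * τ) + γ) (nhds 0) (nhds a) := by
      have : Continuous (fun γ : ℝ => a * Real.exp (γ * τ) + γ) :=
        (continuous_const.mul (Real.continuous_exp.comp
          (continuous_id.mul continuous_const))).add continuous_id
      have h0 := this.tendsto 0
      simpa using h0
    have hev : ∀ᶠ γ in nhds (0:ℝ), a * Real.exp (γ * τ) + γ < d :=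
      hco.eventually_lt_const had
    have hev' : ∀ᶠ γ in nhdsWithin (0:ℝ) (Set.Ioi 0),
        a * Real.exp (γ * τ) + γ < d ∧ γ ∈ Set.Ioi (0:ℝ) :=
      (hev.filter_mono nhdsWithin_le_nhds).and eventually_mem_nhdsWithin
    obtain ⟨γ, h1, h2⟩ := hev'.exists
    exact ⟨γ, h2, h1⟩
  -- Bound on the initial interval
  have hsub : Set.Ici (t₁ - τ) ⊆ Set.Ici (t₀ - τ₂) := by
    apply Set.Ici_subset_Ici.2
    rw [ht₁def]; linarith
  have hsubIcc : Set.Icc (t₁ - τ) t₁ ⊆ Set.Ici (t₀ - τ₂) :=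
    fun x hx => hsub hx.1
  obtain ⟨C, hC⟩ := isCompact_Icc.exists_bound_of_continuousOn (hcont.mono hsubIcc)
  set B : ℝ := max C 0 + 1 with hBdef
  have hB : 0 < B := by positivity
  set φ : ℝ → ℝ := fun t => B * Real.exp (-γ * (t - t₁)) with hφdef
  have hφpos : ∀ t, 0 < φ t := fun t => mul_pos hB (Real.exp_pos _)
  have hφder : ∀ t, HasDerivAt φ (-γ * φ t) t := by
    intro t
    have h1 : HasDerivAt (fun s : ℝ => -γ * (s - t₁)) (-γ * 1) t :=
      ((hasDerivAt_id t).sub_const t₁).const_mul (-γ)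
    have h2 := (h1.exp).const_mul B
    have h3 : -γ * φ t = B * (Real.exp (-γ * (t - t₁)) * (-γ * 1)) := by
      show -γ * (B * Real.exp (-γ * (t - t₁))) = _; ring
    rw [h3]; exact h2
  have hφcont : Continuous φ :=
    continuous_const.mul (Real.continuous_exp.comp
      (continuous_const.mul (continuous_id.sub continuous_const)))
  have hinit : ∀ t ∈ Set.Icc (t₁ - τ) t₁, |h t| < φ t := by
    intro t ht
    have h1 : |h t| ≤ C := by
      have := hC t ht
      rwa [Real.norm_eq_abs] at this
    have h2 : (1:ℝ) ≤ Real.exp (-γ * (t - t₁)) := by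
      apply Real.one_le_exp
      nlinarith [ht.2]
    have h3 : B ≤ φ t := by
      show B ≤ B * Real.exp (-γ * (t - t₁))
      nlinarith
    have h4 : C ≤ max C 0 := le_max_left _ _
    rw [hBdef] at h3
    linarith
  -- Main claim
  have hmain : ∀ t, t₁ - τ ≤ t → |h t| < φ t := by
    by_contra hcon
    push_neg at hcon
    obtain ⟨t', ht'1, ht'2⟩ := hcon
    set S : Set ℝ := Set.Ici (t₁ - τ) ∩ (fun t => |h t| - φ t) ⁻¹' Set.Ici 0 with hSdef
    have hScl : IsClosed S := by
      apply ContinuousOn.preimage_isClosed_of_isClosed _ isClosed_Ici isClosed_Ici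
      exact ((hcont.mono hsub).abs.sub hφcont.continuousOn)
    have hSne : S.Nonempty := ⟨t', ht'1, by simp [Set.mem_preimage]; linarith⟩
    have hSbd : BddBelow S := ⟨t₁ - τ, fun x hx => hx.1⟩
    set ts : ℝ := sInf S with htsdef
    have hmem : ts ∈ S := hScl.csInf_mem hSne hSbd
    have hts1 : t₁ - τ ≤ ts := hmem.1
    have hstar : φ ts ≤ |h ts| := by
      have := hmem.2
      simp only [Set.mem_preimage, Set.mem_Ici, sub_nonneg] at this
      exact this
    have htgt : t₁ < ts := by
      by_contra hle
      push_neg at hle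
      exact absurd hstar (not_le.2 (hinit ts ⟨hts1, hle⟩))
    have hless : ∀ t, t₁ - τ ≤ t → t < ts → |h t| < φ t := by
      intro t ht htlt
      by_contra hge
      push_neg at hge
      have htS : t ∈ S := ⟨ht, by simp [Set.mem_preimage]; linarith⟩
      exact absurd (csInf_le hSbd htS) (not_le.2 htlt)
    have ht0 : t₀ < ts := by rw [ht₁def] at htgt; linarith
    have hder := hde ts ht0
    -- bound on delayed values
    have hu : ∀ τ' : ℝ, 0 < τ' → τ' ≤ τ → |h (ts - τ')| ≤ Real.exp (γ * τ) * φ ts := by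
      intro τ' hp1 hp2
      have hlt := hless (ts - τ') (by linarith) (by linarith)
      have hφle : φ (ts - τ') ≤ Real.exp (γ * τ) * φ ts := by
        rw [hφdef]
        simp only
        have hexp : -γ * (ts - τ' - t₁) ≤ γ * τ + -γ * (ts - t₁) := by nlinarith
        calc B * Real.exp (-γ * (ts - τ' - t₁))
            ≤ B * Real.exp (γ * τ + -γ * (ts - t₁)) :=
              mul_le_mul_of_nonneg_left (Real.exp_le_exp.2 hexp) hB.le
          _ = Real.exp (γ * τ) * (B * Real.exp (-γ * (ts - t₁))) := by
              rw [Real.exp_add]; ring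
      linarith
    have hu1 := hu τ₁ hτ₁ hτ1
    have hu2 := hu τ₂ hτ₂ hτ2
    -- bound on forcing term
    have hA : ∀ u : ℝ, |G (κ u * h u)| ≤ K * |h u| := by
      intro u
      refine le_trans (hGb _) ?_
      rw [abs_mul]
      exact mul_le_mul_of_nonneg_right (hκb u) (abs_nonneg _)
    set F : ℝ := b * G (κ (ts - τ₁) * h (ts - τ₁)) - c * G (κ (ts - τ₂) * h (ts - τ₂))
      with hFdef
    have hfb : |F| < (d - γ) * φ ts := by
      have e1 : |F| ≤ b * |G (κ (ts - τ₁) * h (ts - τ₁))|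
          + c * |G (κ (ts - τ₂) * h (ts - τ₂))| := by
        rw [hFdef]
        calc |b * G (κ (ts - τ₁) * h (ts - τ₁)) - c * G (κ (ts - τ₂) * h (ts - τ₂))|
            ≤ |b * G (κ (ts - τ₁) * h (ts - τ₁))| + |c * G (κ (ts - τ₂) * h (ts - τ₂))| :=
              abs_sub _ _
          _ = b * |G (κ (ts - τ₁) * h (ts - τ₁))| + c * |G (κ (ts - τ₂) * h (ts - τ₂))| := by
              rw [abs_mul, abs_mul, abs_of_pos hb, abs_of_pos hc]
      have e2 := hA (ts - τ₁)
      have e3 := hA (ts - τ₂)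
      have e4 : K * |h (ts - τ₁)| ≤ K * (Real.exp (γ * τ) * φ ts) :=
        mul_le_mul_of_nonneg_left hu1 hK0
      have e5 : K * |h (ts - τ₂)| ≤ K * (Real.exp (γ * τ) * φ ts) :=
        mul_le_mul_of_nonneg_left hu2 hK0
      have e6 : |F| ≤ a * Real.exp (γ * τ) * φ ts := by
        rw [hadef]
        nlinarith [hb.le, hc.le]
      have e7 : a * Real.exp (γ * τ) < d - γ := by
        nlinarith [Real.exp_pos (γ * τ)]
      nlinarith [hφpos ts]
    have hφd := hφder ts
    have hssmall : t₁ - τ < ts := by linarith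
    rcases le_or_gt 0 (h ts) with hpos | hneg
    · -- h ts ≥ 0
      have hh : φ ts ≤ h ts := by rwa [abs_of_nonneg hpos] at hstar
      have hgd : HasDerivAt (fun t => h t - φ t) (F - d * h ts - -γ * φ ts) ts := by
        have := hder.sub hφd
        exact this
      have hneg' : ∀ t, t₁ - τ < t → t < ts → h t - φ t < 0 := by
        intro t ht1 ht2
        have h5 := hless t ht1.le ht2
        have h6 := (abs_lt.1 h5).2
        linarith
      have hwneg : F - d * h ts - -γ * φ ts < 0 := by
        have hF1 : F ≤ |F| := le_abs_self _
        have h7 : d * φ ts ≤ d * h ts := mul_le_mul_of_nonneg_left hh hd.le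
        linarith
      exact no_upcross hssmall hneg'
        (show (0:ℝ) ≤ h ts - φ ts by linarith) hgd hwneg
    · -- h ts < 0
      have hh : φ ts ≤ -h ts := by rwa [abs_of_neg hneg] at hstar
      have hgd : HasDerivAt (fun t => -h t - φ t) (-(F - d * h ts) - -γ * φ ts) ts := by
        have := hder.neg.sub hφd
        exact this
      have hneg' : ∀ t, t₁ - τ < t → t < ts → -h t - φ t < 0 := by
        intro t ht1 ht2
        have h5 := hless t ht1.le ht2
        have h6 := (abs_lt.1 h5).1
        linarith
      have hwneg : -(F - d * h ts) - -γ * φ ts < 0 := by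
        have hF1 : -F ≤ |F| := neg_le_abs _
        have h7 : d * φ ts ≤ d * (-h ts) := mul_le_mul_of_nonneg_left hh hd.le
        linarith
      exact no_upcross hssmall hneg'
        (show (0:ℝ) ≤ -h ts - φ ts by linarith) hgd hwneg
  -- Conclusion: squeeze
  have hφ0 : Tendsto φ atTop (nhds 0) := by
    rw [hφdef]
    have h1 : Tendsto (fun t : ℝ => -γ * (t - t₁)) atTop atBot := by
      apply Tendsto.const_mul_atTop_of_neg (neg_neg_iff_pos.2 hγpos)
      exact tendsto_atTop_add_const_right _ _ tendsto_id
    have h2 := (Real.tendsto_exp_atBot.comp h1).const_mul B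
    simpa using h2
  have hlow : ∀ᶠ t in atTop, -φ t ≤ h t :=
    (eventually_ge_atTop (t₁ - τ)).mono fun t ht => (abs_lt.1 (hmain t ht)).1.le
  have hhigh : ∀ᶠ t in atTop, h t ≤ φ t :=
    (eventually_ge_atTop (t₁ - τ)).mono fun t ht => (abs_lt.1 (hmain t ht)).2.le
  have hφ0' : Tendsto (fun t => -φ t) atTop (nhds 0) := by
    have := hφ0.neg
    simpa using this
  exact tendsto_of_tendsto_of_tendsto_of_le_of_le' hφ0' hφ0 hlow hhigh
end
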